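/- There exists a 5-point set K of 2×2 upper triangular real matrices such that the lamination convex hull L(K) is not compact (it is not closed). -/

import Mathlib

abbrev M2 := Matrix (Fin 2) (Fin 2) ℝ

/-- `S ⊆ ℝ^{2×2}` is lamination convex. -/
def LamConvex (S : Set M2) : Prop :=
  ∀ X ∈ S, ∀ Y ∈ S, (X - Y).rank = 1 → segment ℝ X Y ⊆ S

/-- The lamination convex hull of `K`. -/
def lamHull (K : Set M2) : Set M2 :=
  ⋂₀ {S | K ⊆ S ∧ LamConvex S}

namespace Stmt18Aux

lemma rank_le_one_of_det (M : M2) (h : M.det = 0) : M.rank ≤ 1 := by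
  by_contra hr
  push_neg at hr
  have h2 : M.rank ≤ 2 := by simpa using M.rank_le_card_width
  have hr2 : M.rank = 2 := le_antisymm h2 hr
  have htop : LinearMap.range M.mulVecLin = ⊤ := by
    apply Submodule.eq_top_of_finrank_eq
    rw [← Matrix.rank, hr2]
    simp [Module.finrank_pi]
  have hsurj : Function.Surjective M.mulVec := by
    intro v
    have := htop ▸ Submodule.mem_top (x := v) (R := ℝ)
    obtain ⟨w, hw⟩ := LinearMap.mem_range.mp this
    exact ⟨w, hw⟩
  have : IsUnit M := (Matrix.mulVec_surjective_iff_isUnit).mp hsurj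
  have := (Matrix.isUnit_iff_isUnit_det M).mp this
  exact (this.ne_zero) h

lemma rank_pos_of_ne_zero (M : M2) (h : M ≠ 0) : 1 ≤ M.rank := by
  by_contra hr
  push_neg at hr
  interval_cases hM : M.rank
  · apply h
    have : LinearMap.range M.mulVecLin = ⊥ := by
      rw [← Submodule.finrank_eq_zero (R := ℝ)]
      exact hM
    ext i j
    have hcol : M.mulVec (Pi.single j 1) = 0 := by
      have : M.mulVecLin (Pi.single j 1) ∈ (⊥ : Submodule ℝ (Fin 2 → ℝ)) := by
        rw [← this]; exact LinearMap.mem_range_self _ _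
      simpa using this
    have := congrFun hcol i
    simpa [Matrix.mulVec_single] using this

lemma rank_one' (M : M2) (h : M ≠ 0) (hd : M.det = 0) : M.rank = 1 :=
  le_antisymm (rank_le_one_of_det M hd) (rank_pos_of_ne_zero M h)

lemma rank_two (M : M2) (h : M.det ≠ 0) : M.rank = 2 := by
  have := Matrix.rank_of_isUnit M ((Matrix.isUnit_iff_isUnit_det M).mpr (isUnit_iff_ne_zero.mpr h))
  simpa using this

noncomputable def A1 : M2 := !![1, 0; 0, 3]
noncomputable def A2 : M2 := !![3, 0; 0, -1]
noncomputable def A3 : M2 := !![-1, 0; 0, -3]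
noncomputable def A4 : M2 := !![-3, 0; 0, 1]
noncomputable def X (c : ℝ) : M2 := !![1, c; 0, -1]

noncomputable def K5 : Set M2 := {A1, A2, A3, A4, X 1}

lemma subset_hull : K5 ⊆ lamHull K5 := fun x hx S hS => hS.1 hx

lemma hull_lamConvex : LamConvex (lamHull K5) := by
  intro P hP Q hQ hr Z hZ S hS
  exact hS.2 P (hP S hS) Q (hQ S hS) hr hZ

lemma step_mem {P Q R : M2} (hP : P ∈ lamHull K5) (hQ : Q ∈ lamHull K5)
    (hne : P - Q ≠ 0) (hdet : (P - Q).det = 0)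
    (hR : (2⁻¹ : ℝ) • P + (2⁻¹ : ℝ) • Q = R) : R ∈ lamHull K5 :=
  hull_lamConvex P hP Q hQ (rank_one' _ hne hdet)
    ⟨2⁻¹, 2⁻¹, by norm_num, by norm_num, by norm_num, hR⟩

lemma spiral_step (c : ℝ) (h : X c ∈ lamHull K5) : X (c / 16) ∈ lamHull K5 := by
  have hA1 : A1 ∈ lamHull K5 := subset_hull (by simp [K5])
  have hA2 : A2 ∈ lamHull K5 := subset_hull (by simp [K5])
  have hA3 : A3 ∈ lamHull K5 := subset_hull (by simp [K5])
  have hA4 : A4 ∈ lamHull K5 := subset_hull (by simp [K5])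
  have h1 : (!![1, c/2; 0, 1] : M2) ∈ lamHull K5 := by
    refine step_mem h hA1 ?_ ?_ ?_
    · intro he
      have := congrFun (congrFun he 1) 1
      norm_num [X, A1, Matrix.sub_apply] at this
    · simp [Matrix.det_fin_two, X, A1, Matrix.sub_apply]
    · ext i j; fin_cases i <;> fin_cases j <;>
        simp [X, A1, Matrix.add_apply, Matrix.smul_apply] <;> ring
  have h2 : (!![-1, c/4; 0, 1] : M2) ∈ lamHull K5 := by
    refine step_mem h1 hA4 ?_ ?_ ?_
    · intro he
      have := congrFun (congrFun he 0) 0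
      norm_num [A4, Matrix.sub_apply] at this
    · simp [Matrix.det_fin_two, A4, Matrix.sub_apply]
    · ext i j; fin_cases i <;> fin_cases j <;>
        simp [A4, Matrix.add_apply, Matrix.smul_apply] <;> ring
  have h3 : (!![-1, c/8; 0, -1] : M2) ∈ lamHull K5 := by
    refine step_mem h2 hA3 ?_ ?_ ?_
    · intro he
      have := congrFun (congrFun he 1) 1
      norm_num [A3, Matrix.sub_apply] at this
    · simp [Matrix.det_fin_two, A3, Matrix.sub_apply]
    · ext i j; fin_cases i <;> fin_cases j <;>
        simp [A3, Matrix.add_apply, Matrix.smul_apply] <;> ring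
  refine step_mem h3 hA2 ?_ ?_ ?_
  · intro he
    have := congrFun (congrFun he 0) 0
    norm_num [A2, Matrix.sub_apply] at this
  · simp [Matrix.det_fin_two, A2, Matrix.sub_apply]
  · ext i j; fin_cases i <;> fin_cases j <;>
      simp [X, A2, Matrix.add_apply, Matrix.smul_apply] <;> ring

lemma spiral (n : ℕ) : X ((16 : ℝ)⁻¹ ^ n) ∈ lamHull K5 := by
  induction n with
  | zero => simpa using subset_hull (show X 1 ∈ K5 by simp [K5])
  | succ n ih =>
      have := spiral_step _ ih
      have he : (16 : ℝ)⁻¹ ^ n / 16 = (16 : ℝ)⁻¹ ^ (n + 1) := by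
        rw [pow_succ]; ring
      rwa [he] at this

noncomputable def S : Set M2 := {M : M2 | 0 < M 0 1} ∪ {A1, A2, A3, A4}

lemma S_lamConvex : LamConvex S := by
  intro P hP Q hQ hr Z hZ
  obtain ⟨a, b, ha, hb, hab, hZ⟩ := hZ
  have hzab : (a • P + b • Q) 0 1 = a * P 0 1 + b * Q 0 1 := by
    simp [Matrix.add_apply, Matrix.smul_apply]
  rcases hP with hP | hP
  · rcases hQ with hQ | hQ
    · -- both have positive entry
      left
      rw [← hZ]
      rw [Set.mem_setOf_eq, hzab]
      rcases eq_or_lt_of_le ha with h0 | h0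
      · have hb1 : b = 1 := by linarith
        simp [← h0, hb1]; exact hQ
      · exact add_pos_of_pos_of_nonneg (mul_pos h0 hP) (mul_nonneg hb hQ.le)
    · -- P positive, Q one of the corners (Q 0 1 = 0)
      have hQ01 : Q 0 1 = 0 := by
        rcases hQ with rfl | rfl | rfl | rfl <;> simp [A1, A2, A3, A4]
      rcases eq_or_lt_of_le ha with h0 | h0
      · have hb1 : b = 1 := by linarith
        have : Z = Q := by rw [← hZ, ← h0, hb1]; simp
        rw [this]; exact Or.inr hQ
      · left
        rw [← hZ, Set.mem_setOf_eq, hzab, hQ01]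
        simpa using mul_pos h0 hP
  · rcases hQ with hQ | hQ
    · have hP01 : P 0 1 = 0 := by
        rcases hP with rfl | rfl | rfl | rfl <;> simp [A1, A2, A3, A4]
      rcases eq_or_lt_of_le hb with h0 | h0
      · have ha1 : a = 1 := by linarith
        have : Z = P := by rw [← hZ, ← h0, ha1]; simp
        rw [this]; exact Or.inr hP
      · left
        rw [← hZ, Set.mem_setOf_eq, hzab, hP01]
        simpa using mul_pos h0 hQ
    · -- both corners: rank of difference is 0 or 2, contradiction
      exfalso
      rcases hP with rfl | rfl | rfl | rfl <;> rcases hQ with rfl | rfl | rfl | rfl <;>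
        first
          | simp at hr
          | (rw [rank_two _ (by norm_num [A1, A2, A3, A4, Matrix.det_fin_two,
              Matrix.sub_apply])] at hr; norm_num at hr)

lemma K5_subset_S : K5 ⊆ S := by
  intro M hM
  rcases hM with rfl | rfl | rfl | rfl | rfl
  · exact Or.inr (by simp)
  · exact Or.inr (by simp)
  · exact Or.inr (by simp)
  · exact Or.inr (by simp)
  · left; simp [X]

lemma hull_subset_S : lamHull K5 ⊆ S := fun x hx => hx S ⟨K5_subset_S, S_lamConvex⟩

lemma X0_not_mem_S : X 0 ∉ S := by
  rintro (h | h)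
  · simp [X] at h
  · rcases h with h | h | h | h
    · have := congrFun (congrFun h 1) 1; norm_num [X, A1] at this
    · have := congrFun (congrFun h 0) 0; norm_num [X, A2] at this
    · have := congrFun (congrFun h 0) 0; norm_num [X, A3] at this
    · have := congrFun (congrFun h 0) 0; norm_num [X, A4] at this

lemma tendsto_X : Filter.Tendsto (fun n => X ((16 : ℝ)⁻¹ ^ n)) Filter.atTop (nhds (X 0)) := by
  refine tendsto_pi_nhds.2 ?_
  intro i
  rw [tendsto_pi_nhds]
  intro j
  have hpow : Filter.Tendsto (fun n : ℕ => ((16 : ℝ) ^ n)⁻¹) Filter.atTop (nhds 0) := by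
    have : Filter.Tendsto (fun n : ℕ => (16 : ℝ)⁻¹ ^ n) Filter.atTop (nhds 0) := by
      apply tendsto_pow_atTop_nhds_zero_of_lt_one <;> norm_num
    simpa [inv_pow] using this
  fin_cases i <;> fin_cases j <;> simp [X] <;>
    first
      | exact tendsto_const_nhds
      | exact hpow

lemma X0_mem_closure : X 0 ∈ closure (lamHull K5) :=
  mem_closure_of_tendsto tendsto_X (Filter.Eventually.of_forall fun n => spiral n)

lemma hull_not_closed : ¬ IsClosed (lamHull K5) := by
  intro h
  have : X 0 ∈ lamHull K5 := h.closure_subset X0_mem_closure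
  exact X0_not_mem_S (hull_subset_S this)

lemma ne_of_entry {A B : M2} (i j : Fin 2) (h : A i j ≠ B i j) : A ≠ B :=
  fun e => h (by rw [e])

lemma K5_ncard : K5.ncard = 5 := by
  have d12 : A1 ≠ A2 := ne_of_entry 0 0 (by norm_num [A1, A2])
  have d13 : A1 ≠ A3 := ne_of_entry 0 0 (by norm_num [A1, A3])
  have d14 : A1 ≠ A4 := ne_of_entry 0 0 (by norm_num [A1, A4])
  have d23 : A2 ≠ A3 := ne_of_entry 0 0 (by norm_num [A2, A3])
  have d24 : A2 ≠ A4 := ne_of_entry 0 0 (by norm_num [A2, A4])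
  have d34 : A3 ≠ A4 := ne_of_entry 0 0 (by norm_num [A3, A4])
  have d1x : A1 ≠ X 1 := ne_of_entry 0 1 (by norm_num [A1, X])
  have d2x : A2 ≠ X 1 := ne_of_entry 0 1 (by norm_num [A2, X])
  have d3x : A3 ≠ X 1 := ne_of_entry 0 1 (by norm_num [A3, X])
  have d4x : A4 ≠ X 1 := ne_of_entry 0 1 (by norm_num [A4, X])
  rw [K5]
  rw [Set.ncard_insert_of_notMem (by simp [d12, d13, d14, d1x]),
      Set.ncard_insert_of_notMem (by simp [d23, d24, d2x]),
      Set.ncard_insert_of_notMem (by simp [d34, d3x]),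
      Set.ncard_insert_of_notMem (by simp [d4x]),
      Set.ncard_singleton]

lemma K5_upper : ∀ A ∈ K5, A 1 0 = 0 := by
  intro A hA
  rcases hA with rfl | rfl | rfl | rfl | rfl <;> simp [A1, A2, A3, A4, X]

end Stmt18Aux

/-- There is a 5-point set `K` of upper triangular 2×2 matrices whose lamination
convex hull is not compact (in particular, not closed). -/
theorem stmt18 :
    ∃ K : Set M2, K.ncard = 5 ∧ (∀ A ∈ K, A 1 0 = 0) ∧
      ¬ IsCompact (lamHull K) ∧ ¬ IsClosed (lamHull K) := by
  refine ⟨Stmt18Aux.K5, Stmt18Aux.K5_ncard, Stmt18Aux.K5_upper, ?_, Stmt18Aux.hull_not_closed⟩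
  intro hc
  exact Stmt18Aux.hull_not_closed hc.isClosed
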